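/- Let X be a nonempty finite type, μ : X → ℝ≥0 with Σ_x μ(x) = 1, let η : X → Fin L → ℝ≥0 satisfy Σ_y η(x)(y) = 1 for all x, and let p : X → Fin L → ℝ be such that p(x)(y) > 0 and Σ_y p(x)(y) = 1 for all x. Define the population cross-entropy risk R(p) = Σ_x μ(x)·Σ_y η(x)(y)·(−log p(x)(y)), and R_min = Σ_x μ(x)·Σ_y η(x)(y)·(−log η(x)(y)) (with the convention 0·log 0 = 0). Then Σ_x μ(x)·Σ_y |p(x)(y) − η(x)(y)| ≤ √2·√(R(p) − R_min). -/

import Mathlib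

open Finset


section CrossEntropyRegretAux

lemma chi_deriv {t : ℝ} (ht : 0 < t) :
    HasDerivAt (fun t : ℝ => (t+1) * Real.log t - 2*(t-1))
      (Real.log t + (t+1) * t⁻¹ - 2) t := by
  have h1 : HasDerivAt (fun t : ℝ => (t+1) * Real.log t)
      (1 * Real.log t + (t+1) * t⁻¹) t :=
    (((hasDerivAt_id t).add_const 1)).mul (Real.hasDerivAt_log ht.ne')
  have h2 : HasDerivAt (fun t : ℝ => 2*(t-1)) 2 t := by
    simpa using ((hasDerivAt_id t).sub_const 1).const_mul 2
  have h := h1.sub h2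
  rw [one_mul] at h
  exact h

lemma chi_deriv_nonneg {t : ℝ} (ht : 0 < t) :
    0 ≤ Real.log t + (t+1) * t⁻¹ - 2 := by
  have h := Real.one_sub_inv_le_log_of_pos ht
  have h2 : (t+1) * t⁻¹ = 1 + t⁻¹ := by field_simp
  linarith

lemma chi_mono : MonotoneOn (fun t : ℝ => (t+1) * Real.log t - 2*(t-1)) (Set.Ioi 0) := by
  apply monotoneOn_of_deriv_nonneg (convex_Ioi 0)
  · exact fun t ht => ((chi_deriv ht).differentiableAt.continuousAt).continuousWithinAt
  · intro t ht
    rw [interior_Ioi] at ht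
    exact (chi_deriv ht).differentiableAt.differentiableWithinAt
  · intro t ht
    rw [interior_Ioi] at ht
    rw [(chi_deriv ht).deriv]
    exact chi_deriv_nonneg ht



noncomputable def Phi (t : ℝ) : ℝ := 2*(t+2)*(t*Real.log t - t + 1) - 3*(t-1)^2

lemma Phi_deriv {t : ℝ} (ht : 0 < t) :
    HasDerivAt Phi (4 * ((t+1) * Real.log t - 2*(t-1))) t := by
  have h1 : HasDerivAt (fun t : ℝ => t*Real.log t - t + 1) (Real.log t) t := by
    simpa using ((Real.hasDerivAt_mul_log ht.ne').sub (hasDerivAt_id t)).add_const 1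
  have h2 : HasDerivAt (fun t : ℝ => 2*(t+2)) 2 t := by
    simpa using ((hasDerivAt_id t).add_const 2).const_mul 2
  have h3 : HasDerivAt (fun t : ℝ => 3*(t-1)^2) (3*(2*(t-1))) t := by
    simpa using (((hasDerivAt_id t).sub_const 1).pow 2).const_mul 3
  have h : HasDerivAt Phi _ t := (h2.mul h1).sub h3
  convert h using 1
  ring

lemma Phi_one : Phi 1 = 0 := by simp [Phi]

lemma Phi_nonneg {t : ℝ} (ht : 0 < t) : 0 ≤ Phi t := by
  have chi1 : (fun t : ℝ => (t+1) * Real.log t - 2*(t-1)) 1 = 0 := by simp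
  rcases le_or_gt 1 t with h | h
  · -- monotone on Ici 1
    have mono : MonotoneOn Phi (Set.Ici 1) := by
      apply monotoneOn_of_deriv_nonneg (convex_Ici 1)
      · exact fun s hs => ((Phi_deriv (lt_of_lt_of_le one_pos hs)).differentiableAt.continuousAt).continuousWithinAt
      · intro s hs
        rw [interior_Ici] at hs
        exact (Phi_deriv (lt_trans one_pos hs)).differentiableAt.differentiableWithinAt
      · intro s hs
        rw [interior_Ici] at hs
        rw [(Phi_deriv (lt_trans one_pos hs)).deriv]
        have := chi_mono (Set.mem_Ioi.2 one_pos) (Set.mem_Ioi.2 (lt_trans one_pos hs)) hs.le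
        dsimp only at this; rw [Real.log_one] at this
        linarith
    have := mono (Set.mem_Ici.2 le_rfl) (Set.mem_Ici.2 h) h
    rwa [Phi_one] at this
  · have anti : AntitoneOn Phi (Set.Ioc 0 1) := by
      apply antitoneOn_of_deriv_nonpos (convex_Ioc 0 1)
      · exact fun s hs => ((Phi_deriv hs.1).differentiableAt.continuousAt).continuousWithinAt
      · intro s hs
        rw [interior_Ioc] at hs
        exact (Phi_deriv hs.1).differentiableAt.differentiableWithinAt
      · intro s hs
        rw [interior_Ioc] at hs
        rw [(Phi_deriv hs.1).deriv]
        have := chi_mono (Set.mem_Ioi.2 hs.1) (Set.mem_Ioi.2 one_pos) hs.2.le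
        dsimp only at this; rw [Real.log_one] at this
        linarith
    have := anti (Set.mem_Ioc.2 ⟨ht, h.le⟩) (Set.mem_Ioc.2 ⟨one_pos, le_rfl⟩) h.le
    rwa [Phi_one] at this

-- scalar core
lemma core {t : ℝ} (ht : 0 < t) : 3*(t-1)^2 / (2*(t+2)) ≤ t*Real.log t - t + 1 := by
  rw [div_le_iff₀ (by linarith)]
  have := Phi_nonneg ht
  unfold Phi at this
  nlinarith

-- pointwise lemma A
lemma pointA {a b : ℝ} (ha : 0 ≤ a) (hb : 0 < b) :
    3*(a-b)^2 / (2*(a+2*b)) ≤ a*Real.log a - a*Real.log b - a + b := by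
  rcases eq_or_lt_of_le ha with h | h
  · simp only [← h]
    rw [div_le_iff₀ (by linarith)]
    ring_nf
    nlinarith
  · have ht : 0 < a / b := div_pos h hb
    have := core ht
    have hlog : Real.log (a/b) = Real.log a - Real.log b := Real.log_div h.ne' hb.ne'
    rw [hlog] at this
    rw [div_le_iff₀ (by linarith)] at this ⊢
    have hb2 : (0:ℝ) < b^2 := by positivity
    calc 3*(a-b)^2 = (3*(a/b-1)^2) * b^2 := by field_simp
      _ ≤ ((a/b*(Real.log a - Real.log b) - a/b + 1) * (2*(a/b+2))) * b^2 := by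
          nlinarith
      _ = (a*Real.log a - a*Real.log b - a + b) * (2*(a+2*b)) := by field_simp



lemma pinsker {L : ℕ} (a b : Fin L → ℝ) (ha : ∀ y, 0 ≤ a y) (hb : ∀ y, 0 < b y)
    (ha1 : ∑ y, a y = 1) (hb1 : ∑ y, b y = 1) :
    (∑ y, |a y - b y|)^2 ≤ 2 * ∑ y, (a y * Real.log (a y) - a y * Real.log (b y)) := by
  set w : Fin L → ℝ := fun y => 2*(a y + 2*b y)/3 with hw
  have hwpos : ∀ y, 0 < w y := fun y => by
    have := ha y; have := hb y; simp only [hw]; positivity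
  have hws : ∑ y, w y = 2 := by
    simp only [hw]
    rw [← Finset.sum_div, div_eq_iff (by norm_num : (3:ℝ) ≠ 0)]
    simp only [mul_add]
    rw [Finset.sum_add_distrib, ← Finset.mul_sum, ← Finset.mul_sum, ← Finset.mul_sum, ha1, hb1]
    norm_num
  have cs := Finset.sum_mul_sq_le_sq_mul_sq Finset.univ
      (fun y => |a y - b y| / Real.sqrt (w y)) (fun y => Real.sqrt (w y))
  have h1 : ∀ y, |a y - b y| / Real.sqrt (w y) * Real.sqrt (w y) = |a y - b y| := by
    intro y
    rw [div_mul_cancel₀]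
    exact (Real.sqrt_pos.2 (hwpos y)).ne'
  have h2 : ∀ y, (Real.sqrt (w y))^2 = w y := fun y => Real.sq_sqrt (hwpos y).le
  have h3 : ∀ y, (|a y - b y| / Real.sqrt (w y))^2 = (a y - b y)^2 / w y := by
    intro y
    rw [div_pow, sq_abs, h2]
  simp only [h1, h2, h3] at cs
  have key : ∑ y, (a y - b y)^2 / w y
      ≤ ∑ y, (a y * Real.log (a y) - a y * Real.log (b y)) := by
    have step : ∀ y, (a y - b y)^2 / w y
        ≤ a y * Real.log (a y) - a y * Real.log (b y) - a y + b y := by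
      intro y
      have := pointA (ha y) (hb y)
      have hrw : (a y - b y)^2 / w y = 3*(a y - b y)^2 / (2*(a y + 2*b y)) := by
        have h0 : (0:ℝ) < a y + 2*b y := by have := ha y; have := hb y; linarith
        simp only [hw]
        field_simp
      rw [hrw]; exact this
    calc ∑ y, (a y - b y)^2 / w y
        ≤ ∑ y, (a y * Real.log (a y) - a y * Real.log (b y) - a y + b y) :=
          Finset.sum_le_sum fun y _ => step y
      _ = _ := by
          simp only [sub_add, Finset.sum_sub_distrib, ha1, hb1]
          ring
  calc (∑ y, |a y - b y|)^2 ≤ (∑ y, (a y - b y)^2 / w y) * ∑ y, w y := cs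
    _ = 2 * ∑ y, (a y - b y)^2 / w y := by rw [hws]; ring
    _ ≤ 2 * ∑ y, (a y * Real.log (a y) - a y * Real.log (b y)) := by linarith

end CrossEntropyRegretAux

/-- Lemma 4.2, multiclass regret bound: for the population
cross-entropy risk `R(p) = Σ_x μ(x)·Σ_y η(x)(y)·(−log p(x)(y))` and its minimum
`R_min = Σ_x μ(x)·Σ_y η(x)(y)·(−log η(x)(y))` (with `0·log 0 = 0`, which holds
automatically since `Real.log 0 = 0`), the expected L1 estimation error satisfies
`Σ_x μ(x)·Σ_y |p(x)(y) − η(x)(y)| ≤ √2·√(R(p) − R_min)`. -/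
theorem multiclass_cross_entropy_regret_bound
    {X : Type*} [Fintype X] [Nonempty X] {L : ℕ}
    (μ : X → ℝ) (hμ0 : ∀ x, 0 ≤ μ x) (hμ1 : ∑ x, μ x = 1)
    (η : X → Fin L → ℝ) (hη0 : ∀ x y, 0 ≤ η x y) (hη1 : ∀ x, ∑ y, η x y = 1)
    (p : X → Fin L → ℝ) (hp0 : ∀ x y, 0 < p x y) (hp1 : ∀ x, ∑ y, p x y = 1) :
    ∑ x, μ x * ∑ y, |p x y - η x y|
      ≤ Real.sqrt 2 * Real.sqrt
          ((∑ x, μ x * ∑ y, η x y * (-Real.log (p x y)))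
            - ∑ x, μ x * ∑ y, η x y * (-Real.log (η x y))) := by
  set KL : X → ℝ := fun x => ∑ y, (η x y * Real.log (η x y) - η x y * Real.log (p x y))
    with hKL
  have hpin : ∀ x, (∑ y, |p x y - η x y|)^2 ≤ 2 * KL x := by
    intro x
    have h := pinsker (η x) (p x) (hη0 x) (hp0 x) (hη1 x) (hp1 x)
    have h2 : (∑ y, |p x y - η x y|) = ∑ y, |η x y - p x y| :=
      Finset.sum_congr rfl fun y _ => abs_sub_comm _ _
    rw [h2]
    exact h
  have hKL0 : ∀ x, 0 ≤ KL x := by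
    intro x
    have := hpin x
    nlinarith [sq_nonneg (∑ y, |p x y - η x y|)]
  have hstep : ∀ x, ∑ y, |p x y - η x y| ≤ Real.sqrt 2 * Real.sqrt (KL x) := by
    intro x
    have hS : 0 ≤ ∑ y, |p x y - η x y| := Finset.sum_nonneg fun y _ => abs_nonneg _
    rw [← Real.sqrt_mul_self hS] at *
    calc Real.sqrt ((∑ y, |p x y - η x y|) * ∑ y, |p x y - η x y|)
        ≤ Real.sqrt (2 * KL x) := Real.sqrt_le_sqrt (by nlinarith [hpin x])
      _ = Real.sqrt 2 * Real.sqrt (KL x) := Real.sqrt_mul (by norm_num) _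
  have hRD : (∑ x, μ x * ∑ y, η x y * (-Real.log (p x y)))
      - ∑ x, μ x * ∑ y, η x y * (-Real.log (η x y)) = ∑ x, μ x * KL x := by
    rw [← Finset.sum_sub_distrib]
    apply Finset.sum_congr rfl
    intro x _
    rw [← mul_sub, ← Finset.sum_sub_distrib]
    congr 1
    apply Finset.sum_congr rfl
    intro y _
    ring
  rw [hRD]
  calc ∑ x, μ x * ∑ y, |p x y - η x y|
      ≤ ∑ x, μ x * (Real.sqrt 2 * Real.sqrt (KL x)) :=
        Finset.sum_le_sum fun x _ => mul_le_mul_of_nonneg_left (hstep x) (hμ0 x)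
    _ = Real.sqrt 2 * ∑ x, μ x * Real.sqrt (KL x) := by
        rw [Finset.mul_sum]; apply Finset.sum_congr rfl; intro x _; ring
    _ ≤ Real.sqrt 2 * Real.sqrt (∑ x, μ x * KL x) := by
        apply mul_le_mul_of_nonneg_left _ (Real.sqrt_nonneg 2)
        have cs := Finset.sum_mul_sq_le_sq_mul_sq Finset.univ
          (fun x => Real.sqrt (μ x)) (fun x => Real.sqrt (μ x) * Real.sqrt (KL x))
        have e1 : ∀ x : X, Real.sqrt (μ x) * (Real.sqrt (μ x) * Real.sqrt (KL x))
            = μ x * Real.sqrt (KL x) := by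
          intro x
          rw [← mul_assoc, Real.mul_self_sqrt (hμ0 x)]
        have e2 : ∀ x : X, (Real.sqrt (μ x))^2 = μ x := fun x => Real.sq_sqrt (hμ0 x)
        have e3 : ∀ x : X, (Real.sqrt (μ x) * Real.sqrt (KL x))^2 = μ x * KL x := by
          intro x
          rw [mul_pow, Real.sq_sqrt (hμ0 x), Real.sq_sqrt (hKL0 x)]
        simp only [e1, e2, e3, hμ1, one_mul] at cs
        have hA : 0 ≤ ∑ x, μ x * Real.sqrt (KL x) :=
          Finset.sum_nonneg fun x _ => mul_nonneg (hμ0 x) (Real.sqrt_nonneg _)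
        calc ∑ x, μ x * Real.sqrt (KL x)
            = Real.sqrt ((∑ x, μ x * Real.sqrt (KL x))^2) := (Real.sqrt_sq hA).symm
          _ ≤ Real.sqrt (∑ x, μ x * KL x) := Real.sqrt_le_sqrt cs
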